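/- Let a, α : ℤ × ℤ → ℂ* (nowhere-zero complex-valued functions) satisfy a(l,m+1)·α(l,m) = a(l,m)·α(l+1,m) for all (l,m). Then there exist nowhere-zero functions v : ℤ × ℤ → ℂ, λ : ℤ → ℂ, μ : ℤ → ℂ such that a(l,m) = λ(l)·v(l+1,m)/v(l,m) and α(l,m) = μ(m)·v(l,m+1)/v(l,m) for all (l,m). -/

import Mathlib

private noncomputable def zprod (f : ℤ → ℂ) : ℤ → ℂ
  | Int.ofNat n => ∏ k ∈ Finset.range n, f k
  | Int.negSucc n => (∏ k ∈ Finset.range (n+1), f (Int.negSucc k))⁻¹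

private lemma zprod_zero (f : ℤ → ℂ) : zprod f 0 = 1 := by
  simp [zprod]

private lemma zprod_ne_zero (f : ℤ → ℂ) (hf : ∀ k, f k ≠ 0) (l : ℤ) : zprod f l ≠ 0 := by
  cases l with
  | ofNat n => exact Finset.prod_ne_zero_iff.mpr fun k _ => hf _
  | negSucc n => exact inv_ne_zero (Finset.prod_ne_zero_iff.mpr fun k _ => hf _)

private lemma zprod_succ (f : ℤ → ℂ) (hf : ∀ k, f k ≠ 0) (l : ℤ) :
    zprod f (l + 1) = zprod f l * f l := by
  cases l with
  | ofNat n =>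
    show zprod f (Int.ofNat (n+1)) = _
    simp [zprod, Finset.prod_range_succ]
  | negSucc n =>
    cases n with
    | zero =>
      show zprod f 0 = _
      simp [zprod, inv_mul_cancel₀ (hf _)]
    | succ n =>
      show zprod f (Int.negSucc n) = zprod f (Int.negSucc (n+1)) * f (Int.negSucc (n+1))
      simp only [zprod, Finset.prod_range_succ, mul_inv]
      rw [inv_mul_cancel_right₀ (hf _)]

theorem stmt_7 (a α : ℤ × ℤ → ℂ) (ha : ∀ p, a p ≠ 0) (hα : ∀ p, α p ≠ 0)
    (h : ∀ l m : ℤ, a (l, m+1) * α (l, m) = a (l, m) * α (l+1, m)) :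
    ∃ (v : ℤ × ℤ → ℂ) (lam μ : ℤ → ℂ),
      (∀ p, v p ≠ 0) ∧ (∀ l, lam l ≠ 0) ∧ (∀ m, μ m ≠ 0) ∧
      (∀ l m : ℤ, a (l, m) = lam l * v (l+1, m) / v (l, m)) ∧
      (∀ l m : ℤ, α (l, m) = μ m * v (l, m+1) / v (l, m)) := by
  set v : ℤ × ℤ → ℂ := fun p => zprod (fun k => a (k, p.2)) p.1 with hv
  have hvne : ∀ p, v p ≠ 0 := fun p => zprod_ne_zero _ (fun k => ha _) p.1
  have hvsucc : ∀ l m : ℤ, v (l+1, m) = v (l, m) * a (l, m) := by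
    intro l m; exact zprod_succ _ (fun k => ha _) l
  have key : ∀ l m : ℤ, α (l, m) * v (l, m) = α (0, m) * v (l, m+1) := by
    intro l m
    induction l using Int.induction_on with
    | zero => rw [show v (0, m) = 1 from zprod_zero _, show v (0, m+1) = 1 from zprod_zero _]
    | succ l ih =>
      rw [hvsucc l m, hvsucc l (m+1)]
      have hh := h l m
      linear_combination (-(v (l, m))) * hh + a (l, m+1) * ih
    | pred l ih =>
      have hh := h (-(l:ℤ)-1) m
      rw [show (-(l:ℤ)-1) + 1 = -l by ring] at hh
      have e1 := hvsucc (-(l:ℤ)-1) m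
      have e2 := hvsucc (-(l:ℤ)-1) (m+1)
      rw [show (-(l:ℤ)-1) + 1 = -l by ring] at e1 e2
      rw [e1, e2] at ih
      have key' : a (-(l:ℤ)-1, m+1) * (α (-(l:ℤ)-1, m) * v (-(l:ℤ)-1, m))
          = a (-(l:ℤ)-1, m+1) * (α (0, m) * v (-(l:ℤ)-1, m+1)) := by
        linear_combination v (-(l:ℤ)-1, m) * hh + ih
      exact mul_left_cancel₀ (ha _) key'
  refine ⟨v, fun _ => 1, fun m => α (0, m), hvne, fun _ => one_ne_zero, fun m => hα _, ?_, ?_⟩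
  · intro l m
    rw [hvsucc l m, one_mul, mul_comm, mul_div_assoc, div_self (hvne _), mul_one]
  · intro l m
    exact (eq_div_iff (hvne (l, m))).mpr (key l m)
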